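/- In the single-good procurement auction with strictly marginally increasing costs, the optimal cost function J is supermodular: for all S ⊆ L, j ∉ S, and w ∈ S, J((S∪{j}) \ {w}) − J(S∪{j}) ≤ J(S \ {w}) − J(S). -/

import Mathlib

/-- Optimal procurement cost for coalition `S`: quantities are nonnegative
multiples of the increment `m`, represented by their integer number of
increments; `N` is the required number of increments (`M = N·m`), and
`c l n` is bidder `l`'s cost for `n` increments. -/
noncomputable def Jcost {L : Type*} [DecidableEq L] (c : L → ℕ → ℝ) (N : ℕ)
    (S : Finset L) : ℝ :=
  sInf {v : ℝ | ∃ x : L → ℕ, N ≤ ∑ l ∈ S, x l ∧ v = ∑ l ∈ S, c l (x l)}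

/-- Intermediate value for sums: if `∑ mm ≤ A ≤ ∑ MM` with `mm ≤ MM`
pointwise on `T`, there is `u` with `mm ≤ u ≤ MM` on `T` and `∑ u = A`. -/
lemma sum_intermediate {L : Type*} [DecidableEq L] (T : Finset L)
    (mm MM : L → ℕ) (hle : ∀ l ∈ T, mm l ≤ MM l) :
    ∀ A : ℕ, (∑ l ∈ T, mm l) ≤ A → A ≤ ∑ l ∈ T, MM l →
      ∃ u : L → ℕ, (∀ l ∈ T, mm l ≤ u l ∧ u l ≤ MM l) ∧ ∑ l ∈ T, u l = A := by
  classical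
  induction T using Finset.induction_on with
  | empty =>
    intro A h1 h2
    simp only [Finset.sum_empty] at h1 h2
    exact ⟨fun _ => 0, by simp, by simp; omega⟩
  | insert a T' ha IH =>
    intro A h1 h2
    rw [Finset.sum_insert ha] at h1 h2
    have hma : mm a ≤ MM a := hle a (Finset.mem_insert_self a T')
    have hle' : ∀ l ∈ T', mm l ≤ MM l := fun l hl => hle l (Finset.mem_insert_of_mem hl)
    obtain ⟨ua, hmin⟩ : ∃ ua, ua = min (MM a) (A - ∑ l ∈ T', mm l) := ⟨_, rfl⟩
    have hua1 : mm a ≤ ua := by omega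
    have hua2 : ua ≤ MM a := by omega
    have hua3 : ua ≤ A := by omega
    have hb1 : (∑ l ∈ T', mm l) ≤ A - ua := by omega
    have hsle : (∑ l ∈ T', mm l) ≤ ∑ l ∈ T', MM l := Finset.sum_le_sum hle'
    have hb2 : A - ua ≤ ∑ l ∈ T', MM l := by omega
    obtain ⟨u, hu1, hu2⟩ := IH hle' (A - ua) hb1 hb2
    refine ⟨Function.update u a ua, ?_, ?_⟩
    · intro l hl
      rcases Finset.mem_insert.mp hl with rfl | hl
      · simp only [Function.update_self]; omega
      · rw [Function.update_of_ne (ne_of_mem_of_not_mem hl ha)]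
        exact hu1 l hl
    · rw [Finset.sum_insert ha, Function.update_self]
      have hres : ∑ l ∈ T', Function.update u a ua l = ∑ l ∈ T', u l := by
        apply Finset.sum_congr rfl
        intro l hl
        exact Function.update_of_ne (ne_of_mem_of_not_mem hl ha) _ _
      rw [hres, hu2]
      omega

/-- Weak form of the marginal condition. -/
lemma marg_mono {f : ℕ → ℝ}
    (hm : ∀ a b δ : ℕ, a < b → 0 < δ → f (a + δ) - f a < f (b + δ) - f b)
    (a b δ : ℕ) (hab : a ≤ b) : f (a + δ) - f a ≤ f (b + δ) - f b := by
  rcases Nat.eq_zero_or_pos δ with rfl | hδ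
  · simp
  · rcases eq_or_lt_of_le hab with rfl | h
    · exact le_refl _
    · exact (hm a b δ h hδ).le

/-- Core exchange inequality for a convex (strictly marginally increasing)
cost: if `a ≤ u ≤ v ≤ b` and `u + v = a + b` then `f u + f v ≤ f a + f b`. -/
lemma conv_core {f : ℕ → ℝ}
    (hm : ∀ a b δ : ℕ, a < b → 0 < δ → f (a + δ) - f a < f (b + δ) - f b)
    (a u v b : ℕ) (h1 : a ≤ u) (h2 : u ≤ v) (h3 : v ≤ b)
    (hs : u + v = a + b) : f u + f v ≤ f a + f b := by
  have key : f (a + (u - a)) - f a ≤ f (v + (u - a)) - f v :=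
    marg_mono hm a v (u - a) (by omega)
  have e1 : a + (u - a) = u := by omega
  have e2 : v + (u - a) = b := by omega
  rw [e1, e2] at key
  linarith

/-- Exchange inequality: rebalancing a pair within its span doesn't increase
total cost. -/
lemma conv_pair {f : ℕ → ℝ}
    (hm : ∀ a b δ : ℕ, a < b → 0 < δ → f (a + δ) - f a < f (b + δ) - f b)
    (a b u v : ℕ) (hsum : u + v = a + b)
    (h1 : min a b ≤ u) (h2 : u ≤ max a b) : f u + f v ≤ f a + f b := by
  rcases le_total a b with hab | hab
  · rcases le_total u v with huv | huv
    · exact conv_core hm a u v b (by omega) huv (by omega) (by omega)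
    · have := conv_core hm a v u b (by omega) huv (by omega) (by omega)
      linarith
  · rcases le_total u v with huv | huv
    · have := conv_core hm b u v a (by omega) huv (by omega) (by omega)
      linarith
    · have := conv_core hm b v u a (by omega) huv (by omega) (by omega)
      linarith

lemma Jcost_bddBelow {L : Type*} [DecidableEq L] (c : L → ℕ → ℝ) (N : ℕ)
    (hnn : ∀ l n, 0 ≤ c l n) (S : Finset L) :
    BddBelow {v : ℝ | ∃ x : L → ℕ, N ≤ ∑ l ∈ S, x l ∧ v = ∑ l ∈ S, c l (x l)} := by
  refine ⟨0, fun v hv => ?_⟩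
  obtain ⟨x, -, rfl⟩ := hv
  exact Finset.sum_nonneg fun l _ => hnn l (x l)

lemma Jcost_le {L : Type*} [DecidableEq L] (c : L → ℕ → ℝ) (N : ℕ)
    (hnn : ∀ l n, 0 ≤ c l n) (S : Finset L) (x : L → ℕ)
    (hx : N ≤ ∑ l ∈ S, x l) : Jcost c N S ≤ ∑ l ∈ S, c l (x l) :=
  csInf_le (Jcost_bddBelow c N hnn S) ⟨x, hx, rfl⟩

lemma Jcost_near {L : Type*} [DecidableEq L] (c : L → ℕ → ℝ) (N : ℕ)
    (S : Finset L) (hS : S.Nonempty) {ε : ℝ} (hε : 0 < ε) :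
    ∃ x : L → ℕ, N ≤ (∑ l ∈ S, x l) ∧
      (∑ l ∈ S, c l (x l)) < Jcost c N S + ε := by
  classical
  obtain ⟨l0, hl0⟩ := hS
  have hxsum : (∑ l ∈ S, (if l = l0 then N else 0)) = N := by
    rw [Finset.sum_ite_eq' S l0 (fun _ => N), if_pos hl0]
  have hne : {v : ℝ | ∃ x : L → ℕ, N ≤ ∑ l ∈ S, x l ∧
      v = ∑ l ∈ S, c l (x l)}.Nonempty :=
    ⟨∑ l ∈ S, c l (if l = l0 then N else 0),
      fun l => if l = l0 then N else 0, le_of_eq hxsum.symm, rfl⟩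
  obtain ⟨v, hv, hlt⟩ := Real.lt_sInf_add_pos hne hε
  obtain ⟨x, hx1, rfl⟩ := hv
  exact ⟨x, hx1, hlt⟩

/-- Theorem 4: with strictly marginally increasing costs, the
optimal procurement cost `J` is supermodular:
`J((S∪{j}) \ {w}) − J(S∪{j}) ≤ J(S \ {w}) − J(S)`. -/
theorem stmt_7 {L : Type*} [DecidableEq L] (c : L → ℕ → ℝ) (N : ℕ)
    (hN : 0 < N)
    (hc0 : ∀ l, c l 0 = 0)
    (hnn : ∀ l n, 0 ≤ c l n)
    (hmono : ∀ l, Monotone (c l))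
    (hmarg : ∀ l : L, ∀ a b δ : ℕ, a < b → 0 < δ →
      c l (a + δ) - c l a < c l (b + δ) - c l b)
    (S : Finset L) (j : L) (hj : j ∉ S) (w : L) (hw : w ∈ S)
    (hfeas : (S.erase w).Nonempty) :
    Jcost c N ((insert j S).erase w) - Jcost c N (insert j S) ≤
      Jcost c N (S.erase w) - Jcost c N S := by
  classical
  have hjw : j ≠ w := fun h => hj (h ▸ hw)
  have hjT : j ∉ S.erase w := fun h => hj (Finset.mem_of_mem_erase h)
  have hET : (insert j S).erase w = insert j (S.erase w) :=
    Finset.erase_insert_of_ne hjw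
  rw [hET, sub_le_sub_iff]
  apply le_of_forall_pos_le_add
  intro ε hε
  set T := S.erase w with hT
  -- near-optimal allocations
  obtain ⟨x, hxf, hxc⟩ := Jcost_near c N T hfeas (half_pos hε)
  obtain ⟨y, hyf, hyc⟩ := Jcost_near c N (insert j S)
    ⟨j, Finset.mem_insert_self j S⟩ (half_pos hε)
  -- decompose the sums over the coalition `insert j S`
  have hydec : ∑ l ∈ insert j S, y l = y j + (y w + ∑ l ∈ T, y l) := by
    rw [Finset.sum_insert hj, Finset.add_sum_erase S y hw]
  have hycdec : ∑ l ∈ insert j S, c l (y l)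
      = c j (y j) + (c w (y w) + ∑ l ∈ T, c l (y l)) := by
    rw [Finset.sum_insert hj, Finset.add_sum_erase S (fun l => c l (y l)) hw]
  rw [hydec] at hyf
  rw [hycdec] at hyc
  -- pointwise min/max and target sum
  set mm : L → ℕ := fun l => min (x l) (y l) with hmm
  set MM : L → ℕ := fun l => max (x l) (y l) with hMM
  have hmm_le : ∀ l ∈ T, mm l ≤ MM l := fun l _ => min_le_max
  have hmmy : (∑ l ∈ T, mm l) ≤ ∑ l ∈ T, y l :=
    Finset.sum_le_sum fun l _ => min_le_right _ _
  have hxMM : (∑ l ∈ T, x l) ≤ ∑ l ∈ T, MM l :=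
    Finset.sum_le_sum fun l _ => le_max_left _ _
  set A : ℕ := max (∑ l ∈ T, mm l) (N - y w) with hA
  have hA1 : (∑ l ∈ T, mm l) ≤ A := le_max_left _ _
  have hA2 : A ≤ ∑ l ∈ T, MM l := by
    apply max_le (Finset.sum_le_sum fun l _ => min_le_max)
    show N - y w ≤ ∑ l ∈ T, MM l
    omega
  obtain ⟨u, hu1, hu2⟩ := sum_intermediate T mm MM hmm_le A hA1 hA2
  -- the complementary allocation
  set v : L → ℕ := fun l => x l + y l - u l with hv
  have huv : ∀ l ∈ T, u l + v l = x l + y l := by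
    intro l hl
    have h := hu1 l hl
    simp only [hv, hmm, hMM] at h ⊢
    omega
  have hsumuv : (∑ l ∈ T, u l) + (∑ l ∈ T, v l) = (∑ l ∈ T, x l) + ∑ l ∈ T, y l := by
    rw [← Finset.sum_add_distrib, ← Finset.sum_add_distrib]
    exact Finset.sum_congr rfl huv
  -- allocation for S
  set U : L → ℕ := fun l => if l = w then y w else u l with hU
  have hUT : ∑ l ∈ T, U l = ∑ l ∈ T, u l := by
    apply Finset.sum_congr rfl
    intro l hl
    simp only [hU, if_neg (Finset.mem_erase.mp hl).1]
  have hUf : N ≤ ∑ l ∈ S, U l := by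
    rw [← Finset.add_sum_erase S U hw, ← hT, hUT, hu2]
    simp only [hU, if_pos rfl]
    omega
  have hUc : ∑ l ∈ S, c l (U l) = c w (y w) + ∑ l ∈ T, c l (u l) := by
    rw [← Finset.add_sum_erase S (fun l => c l (U l)) hw, ← hT]
    simp only [hU, if_pos rfl]
    congr 1
    apply Finset.sum_congr rfl
    intro l hl
    rw [if_neg (Finset.mem_erase.mp hl).1]
  -- allocation for insert j T
  set V : L → ℕ := fun l => if l = j then y j else v l with hV
  have hVT : ∑ l ∈ T, V l = ∑ l ∈ T, v l := by
    apply Finset.sum_congr rfl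
    intro l hl
    simp only [hV, if_neg (ne_of_mem_of_not_mem hl hjT)]
  have hVf : N ≤ ∑ l ∈ insert j T, V l := by
    rw [Finset.sum_insert hjT, hVT]
    simp only [hV, if_pos rfl]
    omega
  have hVc : ∑ l ∈ insert j T, c l (V l) = c j (y j) + ∑ l ∈ T, c l (v l) := by
    rw [Finset.sum_insert hjT]
    simp only [hV, if_pos rfl]
    congr 1
    apply Finset.sum_congr rfl
    intro l hl
    rw [if_neg (ne_of_mem_of_not_mem hl hjT)]
  -- pointwise cost comparison
  have hcost : (∑ l ∈ T, c l (u l)) + ∑ l ∈ T, c l (v l)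
      ≤ (∑ l ∈ T, c l (x l)) + ∑ l ∈ T, c l (y l) := by
    rw [← Finset.sum_add_distrib, ← Finset.sum_add_distrib]
    apply Finset.sum_le_sum
    intro l hl
    have h := hu1 l hl
    simp only [hmm, hMM] at h
    exact conv_pair (hmarg l) (x l) (y l) (u l) (v l) (huv l hl) h.1 h.2
  -- bound both Jcosts by the constructed allocations
  have hJ1 : Jcost c N (insert j T) ≤ ∑ l ∈ insert j T, c l (V l) :=
    Jcost_le c N hnn (insert j T) V hVf
  have hJ2 : Jcost c N S ≤ ∑ l ∈ S, c l (U l) :=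
    Jcost_le c N hnn S U hUf
  rw [hVc] at hJ1
  rw [hUc] at hJ2
  linarith
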